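/- Let F = F₁ ∪ F₂ over schema R with all attributes in Att(F₁) ∩ Att(F₂) certain, and let U be a CIR over R. If r₁ is a most probable consistent sample of π_{Att(F₁)}U w.r.t. F₁, r₂ is a most probable consistent sample of π_{Att(F₂)}U w.r.t. F₂, and r' is any sample of maximum probability of π_{R∖Att(F)}U, then the combined relation r₁ + r₂ + r' (the natural join of the three tuples per identifier, well-defined since the projections agree on common certain attributes) is a most probable consistent sample of U with respect to F. -/
import Mathlib

lemma pos_of_prod_pos' {α : Type} (s : Finset α) (f : α → ℝ)
    (h0 : ∀ x ∈ s, 0 ≤ f x) (hp : 0 < ∏ x ∈ s, f x) : ∀ x ∈ s, 0 < f x := by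
  intro x hx
  rcases lt_or_eq_of_le (h0 x hx) with h | h
  · exact h
  · exfalso
    rw [Finset.prod_eq_zero hx h.symm] at hp
    exact lt_irrefl 0 hp

lemma dpos' {Att V ι : Type} [Fintype ι] (p : ι → Att → V → ℝ)
    (hnn : ∀ i a v, 0 ≤ p i a v) (s : ι → Att → V) (B : Finset Att)
    (h : 0 < ∏ i : ι, ∏ a ∈ B, p i a (s i a)) :
    ∀ i : ι, ∀ a ∈ B, 0 < p i a (s i a) := by
  intro i a ha
  have houter := pos_of_prod_pos' Finset.univ (fun i => ∏ a ∈ B, p i a (s i a))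
    (fun j _ => Finset.prod_nonneg fun a _ => hnn j a _) h i (Finset.mem_univ i)
  exact pos_of_prod_pos' B (fun a => p i a (s i a)) (fun a _ => hnn i a _) houter a ha

lemma prodW_union' {Att V ι : Type} [Fintype ι] [DecidableEq Att]
    (p : ι → Att → V → ℝ) (s : ι → Att → V) (B C : Finset Att) (h : Disjoint B C) :
    ∏ i : ι, ∏ a ∈ B ∪ C, p i a (s i a)
      = (∏ i : ι, ∏ a ∈ B, p i a (s i a)) * (∏ i : ι, ∏ a ∈ C, p i a (s i a)) := by
  rw [← Finset.prod_mul_distrib]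
  exact Finset.prod_congr rfl fun i _ => Finset.prod_union h



open Classical in
/-- Let `F = F₁ ∪ F₂` over schema `R` with all attributes of
`Att(F₁) ∩ Att(F₂)` certain (deterministic point-mass cells).  If `s1` is a most probable
consistent sample of `π_{Att(F₁)}U` w.r.t. `F₁`, `s2` is a most probable consistent sample of
`π_{Att(F₂)}U` w.r.t. `F₂`, and `s'` is a maximum-probability sample of `π_{R∖Att(F)}U`, then
the combined relation (joining `s1` on `Att(F₁)`, `s2` on `Att(F₂)∖Att(F₁)` and `s'` on the
remaining attributes) is a most probable consistent sample of `U` w.r.t. `F₁ ∪ F₂`. -/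
theorem stmt6 {Att V ι : Type} [Fintype Att] [Fintype V] [Fintype ι]
    (F1 F2 : Finset (Finset Att × Finset Att))
    (p : ι → Att → V → ℝ)
    (hnn : ∀ (i : ι) (a : Att) (v : V), 0 ≤ p i a v)
    (hsum : ∀ (i : ι) (a : Att), ∑ v : V, p i a v = 1)
    (hdet : ∀ a ∈ (F1.sup fun fd => fd.1 ∪ fd.2) ∩ (F2.sup fun fd => fd.1 ∪ fd.2),
      ∀ i : ι, ∃ v : V, ∀ w : V, p i a w = if w = v then 1 else 0)
    (s1 s2 s' : ι → Att → V) :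
    let A1 : Finset Att := F1.sup fun fd => fd.1 ∪ fd.2
    let A2 : Finset Att := F2.sup fun fd => fd.1 ∪ fd.2
    let Sat : Finset (Finset Att × Finset Att) → (ι → Att → V) → Prop := fun G s =>
      ∀ fd ∈ G, ∀ i j : ι, (∀ a ∈ fd.1, s i a = s j a) → ∀ a ∈ fd.2, s i a = s j a
    let w1 : (ι → Att → V) → ℝ := fun s => ∏ i : ι, ∏ a ∈ A1, p i a (s i a)
    let w2 : (ι → Att → V) → ℝ := fun s => ∏ i : ι, ∏ a ∈ A2, p i a (s i a)
    let wr : (ι → Att → V) → ℝ := fun s =>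
      ∏ i : ι, ∏ a ∈ Finset.univ \ (A1 ∪ A2), p i a (s i a)
    let w : (ι → Att → V) → ℝ := fun s => ∏ i : ι, ∏ a : Att, p i a (s i a)
    let comb : ι → Att → V := fun i a =>
      if a ∈ A1 then s1 i a else if a ∈ A2 then s2 i a else s' i a
    -- s1 is a most probable consistent sample of π_{Att(F₁)}U w.r.t. F₁
    (Sat F1 s1 ∧ 0 < w1 s1 ∧ ∀ s, Sat F1 s → 0 < w1 s → w1 s ≤ w1 s1) →
    -- s2 is a most probable consistent sample of π_{Att(F₂)}U w.r.t. F₂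
    (Sat F2 s2 ∧ 0 < w2 s2 ∧ ∀ s, Sat F2 s → 0 < w2 s → w2 s ≤ w2 s2) →
    -- s' is a maximum-probability sample of the projection to the remaining attributes
    (∀ s, wr s ≤ wr s') →
    -- then the combination is a most probable consistent sample of U w.r.t. F₁ ∪ F₂
    (Sat (F1 ∪ F2) comb ∧ 0 < w comb ∧ ∀ s, Sat (F1 ∪ F2) s → w s ≤ w comb) := by
  classical
  intro A1 A2 Sat w1 w2 wr w comb h1 h2 h3
  obtain ⟨hs1, hw1, hmax1⟩ := h1
  obtain ⟨hs2, hw2, hmax2⟩ := h2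
  -- factor positivity for s1 on A1 and s2 on A2
  have key1 : ∀ i : ι, ∀ a ∈ A1, 0 < p i a (s1 i a) := dpos' p hnn s1 A1 hw1
  have key2 : ∀ i : ι, ∀ a ∈ A2, 0 < p i a (s2 i a) := dpos' p hnn s2 A2 hw2
  -- deterministic attributes
  have hdet1 : ∀ a ∈ A1 ∩ A2, ∀ i u, 0 < p i a u → p i a u = 1 := by
    intro a ha i u hu
    obtain ⟨v, hv⟩ := hdet a ha i
    rw [hv] at hu ⊢
    by_cases h : u = v <;> simp [h] at hu ⊢
  have hdet2 : ∀ a ∈ A1 ∩ A2, ∀ i u u', 0 < p i a u → 0 < p i a u' → u = u' := by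
    intro a ha i u u' hu hu'
    obtain ⟨v, hv⟩ := hdet a ha i
    rw [hv] at hu; rw [hv] at hu'
    by_cases h : u = v <;> by_cases h' : u' = v <;> simp [h, h'] at hu hu' ⊢
  have heq12 : ∀ i, ∀ a ∈ A1 ∩ A2, s1 i a = s2 i a := by
    intro i a ha
    exact hdet2 a ha i _ _ (key1 i a (Finset.mem_inter.mp ha).1)
      (key2 i a (Finset.mem_inter.mp ha).2)
  -- comb agrees with s1 on A1, with s2 on A2, with s' off A1 ∪ A2
  have hcA1 : ∀ i, ∀ a ∈ A1, comb i a = s1 i a := by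
    intro i a ha; simp only [comb]; rw [if_pos ha]
  have hcA2 : ∀ i, ∀ a ∈ A2, comb i a = s2 i a := by
    intro i a ha; simp only [comb]
    by_cases h : a ∈ A1
    · rw [if_pos h]; exact heq12 i a (Finset.mem_inter.mpr ⟨h, ha⟩)
    · rw [if_neg h, if_pos ha]
  have hcR : ∀ i, ∀ a ∈ (Finset.univ \ (A1 ∪ A2) : Finset Att), comb i a = s' i a := by
    intro i a ha
    have h12 := Finset.mem_sdiff.mp ha
    have h1 : a ∉ A1 := fun h => h12.2 (Finset.mem_union_left _ h)
    have h2 : a ∉ A2 := fun h => h12.2 (Finset.mem_union_right _ h)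
    simp only [comb]; rw [if_neg h1, if_neg h2]
  -- satisfaction
  have hsat : Sat (F1 ∪ F2) comb := by
    intro fd hfd i j hlhs a ha
    rcases Finset.mem_union.mp hfd with hfd1 | hfd2
    · have hsub : fd.1 ∪ fd.2 ⊆ A1 := Finset.le_sup (f := fun fd => fd.1 ∪ fd.2) hfd1
      have h1 : a ∈ A1 := hsub (Finset.mem_union_right _ ha)
      rw [hcA1 i a h1, hcA1 j a h1]
      refine hs1 fd hfd1 i j ?_ a ha
      intro b hb
      have hb1 : b ∈ A1 := hsub (Finset.mem_union_left _ hb)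
      rw [← hcA1 i b hb1, ← hcA1 j b hb1]
      exact hlhs b hb
    · have hsub : fd.1 ∪ fd.2 ⊆ A2 := Finset.le_sup (f := fun fd => fd.1 ∪ fd.2) hfd2
      have h1 : a ∈ A2 := hsub (Finset.mem_union_right _ ha)
      rw [hcA2 i a h1, hcA2 j a h1]
      refine hs2 fd hfd2 i j ?_ a ha
      intro b hb
      have hb1 : b ∈ A2 := hsub (Finset.mem_union_left _ hb)
      rw [← hcA2 i b hb1, ← hcA2 j b hb1]
      exact hlhs b hb
  -- splitting of w
  have hdisj1 : Disjoint A1 (A2 \ A1) := Finset.disjoint_sdiff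
  have hdisj2 : Disjoint (A1 ∪ A2) (Finset.univ \ (A1 ∪ A2) : Finset Att) :=
    Finset.disjoint_sdiff
  have huniv : (A1 ∪ A2) ∪ (Finset.univ \ (A1 ∪ A2) : Finset Att) = Finset.univ :=
    Finset.union_sdiff_of_subset (Finset.subset_univ _)
  have hA1A2 : A1 ∪ (A2 \ A1) = A1 ∪ A2 := Finset.union_sdiff_self_eq_union
  have hsplit : ∀ s : ι → Att → V, w s =
      ((∏ i : ι, ∏ a ∈ A1, p i a (s i a)) * (∏ i : ι, ∏ a ∈ A2 \ A1, p i a (s i a))) *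
        wr s := by
    intro s
    have : w s = ∏ i : ι, ∏ a ∈ (A1 ∪ A2) ∪ (Finset.univ \ (A1 ∪ A2) : Finset Att),
        p i a (s i a) := by
      simp only [w]; rw [huniv]
    have h12 : (∏ i : ι, ∏ a ∈ A1 ∪ A2, p i a (s i a))
        = (∏ i : ι, ∏ a ∈ A1, p i a (s i a)) * ∏ i : ι, ∏ a ∈ A2 \ A1, p i a (s i a) := by
      rw [← hA1A2, prodW_union' p s _ _ hdisj1]
    rw [this, prodW_union' p s _ _ hdisj2, h12]
  -- comb pieces
  have hcw1 : (∏ i : ι, ∏ a ∈ A1, p i a (comb i a)) = w1 s1 :=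
    Finset.prod_congr rfl fun i _ => Finset.prod_congr rfl fun a ha => by
      rw [hcA1 i a ha]
  have hcw2 : (∏ i : ι, ∏ a ∈ A2 \ A1, p i a (comb i a))
      = ∏ i : ι, ∏ a ∈ A2 \ A1, p i a (s2 i a) :=
    Finset.prod_congr rfl fun i _ => Finset.prod_congr rfl fun a ha => by
      rw [hcA2 i a (Finset.mem_sdiff.mp ha).1]
  have hcwr : wr comb = wr s' :=
    Finset.prod_congr rfl fun i _ => Finset.prod_congr rfl fun a ha => by
      rw [hcR i a ha]
  -- decompose w2 over A1 ∩ A2 and A2 \ A1, for samples positive on A1 ∩ A2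
  have hw2split : ∀ s : ι → Att → V, (∀ i, ∀ a ∈ A1 ∩ A2, 0 < p i a (s i a)) →
      w2 s = ∏ i : ι, ∏ a ∈ A2 \ A1, p i a (s i a) := by
    intro s hpos
    have hA2 : (A2 ∩ A1) ∪ (A2 \ A1) = A2 := by
      rw [Finset.union_comm]; exact Finset.sdiff_union_inter A2 A1
    have hdisj : Disjoint (A2 ∩ A1) (A2 \ A1) := by
      refine Finset.disjoint_left.mpr fun a ha ha' => ?_
      exact (Finset.mem_sdiff.mp ha').2 (Finset.mem_inter.mp ha).2
    have h1 : (∏ i : ι, ∏ a ∈ A2 ∩ A1, p i a (s i a)) = 1 := by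
      refine Finset.prod_eq_one fun i _ => Finset.prod_eq_one fun a ha => ?_
      have ha' : a ∈ A1 ∩ A2 := by
        rw [Finset.inter_comm]; exact ha
      exact hdet1 a ha' i _ (hpos i a ha')
    have : w2 s = ∏ i : ι, ∏ a ∈ (A2 ∩ A1) ∪ (A2 \ A1), p i a (s i a) := by
      simp only [w2]; rw [hA2]
    rw [this, prodW_union' p s _ _ hdisj, h1, one_mul]
  -- positivity of wr s'
  have hwrs' : 0 < wr s' := by
    have hexists : ∀ i a, ∃ v, 0 < p i a v := by
      intro i a
      by_contra hcon
      push_neg at hcon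
      have : ∑ v : V, p i a v = 0 := Finset.sum_eq_zero fun v _ =>
        le_antisymm (hcon v) (hnn i a v)
      rw [hsum i a] at this
      norm_num at this
    set smax : ι → Att → V := fun i a => Classical.choose (hexists i a) with hsmax
    have hsmaxpos : 0 < wr smax := by
      refine Finset.prod_pos fun i _ => Finset.prod_pos fun a _ => ?_
      exact Classical.choose_spec (hexists i a)
    exact lt_of_lt_of_le hsmaxpos (h3 smax)
  -- positivity of w comb
  have hx2 : 0 < ∏ i : ι, ∏ a ∈ A2 \ A1, p i a (s2 i a) := by
    refine Finset.prod_pos fun i _ => Finset.prod_pos fun a ha => ?_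
    exact key2 i a (Finset.mem_sdiff.mp ha).1
  have hwcomb : w comb = (w1 s1 * ∏ i : ι, ∏ a ∈ A2 \ A1, p i a (s2 i a)) * wr s' := by
    rw [hsplit comb, hcw1, hcw2, hcwr]
  have hpos : 0 < w comb := by
    rw [hwcomb]
    exact mul_pos (mul_pos hw1 hx2) hwrs'
  refine ⟨hsat, hpos, ?_⟩
  -- maximality
  intro s hs
  by_cases hws : 0 < w s
  · have keyS : ∀ i : ι, ∀ a, 0 < p i a (s i a) := by
      intro i a
      exact dpos' p hnn s Finset.univ hws i a (Finset.mem_univ a)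
    have hsF1 : Sat F1 s := fun fd hfd => hs fd (Finset.mem_union_left _ hfd)
    have hsF2 : Sat F2 s := fun fd hfd => hs fd (Finset.mem_union_right _ hfd)
    have hw1s : 0 < w1 s :=
      Finset.prod_pos fun i _ => Finset.prod_pos fun a _ => keyS i a
    have hw2s : 0 < w2 s :=
      Finset.prod_pos fun i _ => Finset.prod_pos fun a _ => keyS i a
    have hle1 : w1 s ≤ w1 s1 := hmax1 s hsF1 hw1s
    have hle2' : w2 s ≤ w2 s2 := hmax2 s hsF2 hw2s
    have hsplitS := hw2split s (fun i a _ => keyS i a)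
    have hsplitS2 := hw2split s2 (fun i a ha => key2 i a (Finset.mem_inter.mp ha).2)
    have hle2 : (∏ i : ι, ∏ a ∈ A2 \ A1, p i a (s i a))
        ≤ ∏ i : ι, ∏ a ∈ A2 \ A1, p i a (s2 i a) := by
      rw [← hsplitS, ← hsplitS2]; exact hle2'
    have hler : wr s ≤ wr s' := h3 s
    have hnn1 : 0 ≤ w1 s :=
      Finset.prod_nonneg fun i _ => Finset.prod_nonneg fun a _ => hnn i a _
    have hnn2 : 0 ≤ ∏ i : ι, ∏ a ∈ A2 \ A1, p i a (s i a) :=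
      Finset.prod_nonneg fun i _ => Finset.prod_nonneg fun a _ => hnn i a _
    have hnnr : 0 ≤ wr s :=
      Finset.prod_nonneg fun i _ => Finset.prod_nonneg fun a _ => hnn i a _
    rw [hsplit s, hwcomb]
    refine mul_le_mul (mul_le_mul hle1 hle2 hnn2 (le_of_lt hw1)) hler hnnr ?_
    exact le_of_lt (mul_pos hw1 hx2)
  · push_neg at hws
    exact le_trans hws (le_of_lt hpos)
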